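/- arXiv:2402.03034 — 2 statements merged into one kernel-verified Lean document; each statement's English description precedes it below -/
import Mathlib

section
/- Let θ > 0, x₀ ∈ ℝ, t₀ > 0, 0 < ϱ < √t₀. Suppose u ∈ C^{2,1}(B(x₀,ϱ) × (t₀-ϱ², t₀]) is nonnegative, satisfies ∂_t u - u'' ≤ -θ on the open set {u > 0} ∩ (B(x₀,ϱ) × (t₀-ϱ², t₀)), and u ≤ (θ/3)ϱ² everywhere on B(x₀,ϱ) × (t₀-ϱ², t₀]. Then u(x₀,t₀) = 0. -/
open Set Filter Topology

/-- One-sided first derivative test: if `f t ≤ f b` for `t` in a left neighborhood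
`Ioo lo b` and `f` is differentiable at `b`, then `f' b ≥ 0`. -/
lemma aux_left_deriv_nonneg {f : ℝ → ℝ} {d b lo : ℝ} (hlo : lo < b)
    (hd : HasDerivAt f d b) (hmax : ∀ t ∈ Ioo lo b, f t ≤ f b) : 0 ≤ d := by
  by_contra hneg
  push_neg at hneg
  have hs : Tendsto (slope f b) (𝓝[<] b) (𝓝 d) :=
    (hasDerivAt_iff_tendsto_slope.1 hd).mono_left
      (nhdsWithin_mono b fun y hy => ne_of_lt hy)
  have h1 : ∀ᶠ t in 𝓝[<] b, slope f b t < 0 := hs.eventually_lt_const hneg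
  have h2 : ∀ᶠ t in 𝓝[<] b, t ∈ Ioo lo b :=
    eventually_of_mem (Ioo_mem_nhdsLT_of_mem ⟨hlo, le_refl b⟩) fun t ht => ht
  obtain ⟨t, ht1, ht2⟩ := (h1.and h2).exists
  rw [slope_def_field] at ht1
  have htb : t - b < 0 := sub_neg.2 ht2.2
  have : 0 < f t - f b := by
    rcases div_neg_iff.1 ht1 with ⟨h, h'⟩ | ⟨h, h'⟩
    · linarith
    · linarith
  have := hmax t ht2
  linarith

/-- Second derivative test at an interior maximum. -/
lemma aux_snd_deriv_nonpos {h H : ℝ → ℝ} {a lo hi D : ℝ}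
    (ha : a ∈ Ioo lo hi)
    (hh : ∀ x ∈ Ioo lo hi, HasDerivAt h (H x) x)
    (hH : HasDerivAt H D a)
    (hmax : ∀ x ∈ Ioo lo hi, h x ≤ h a) : D ≤ 0 := by
  have hHa : H a = 0 := by
    have hloc : IsLocalMax h a :=
      eventually_of_mem (Ioo_mem_nhds ha.1 ha.2) hmax
    exact hloc.hasDerivAt_eq_zero (hh a ha)
  by_contra hpos
  push_neg at hpos
  have hs : Tendsto (slope H a) (𝓝[>] a) (𝓝 D) :=
    (hasDerivAt_iff_tendsto_slope.1 hH).mono_left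
      (nhdsWithin_mono a fun y hy => ne_of_gt hy)
  have h1 : {y | 0 < slope H a y} ∈ 𝓝[>] a := hs.eventually_const_lt hpos
  obtain ⟨c, hc, hsub⟩ := mem_nhdsGT_iff_exists_Ioc_subset.1 h1
  set c' := min c ((a + hi) / 2) with hc'def
  have hac' : a < c' := lt_min hc (by simp only [mem_Ioo] at ha; linarith [ha.2])
  have hc'hi : c' < hi := lt_of_le_of_lt (min_le_right _ _)
    (by simp only [mem_Ioo] at ha; linarith [ha.2])
  have hIcc : Icc a c' ⊆ Ioo lo hi := fun y hy =>
    ⟨lt_of_lt_of_le ha.1 hy.1, lt_of_le_of_lt hy.2 hc'hi⟩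
  have hmono : StrictMonoOn h (Icc a c') := by
    apply strictMonoOn_of_deriv_pos (convex_Icc a c')
    · exact fun y hy => (hh y (hIcc hy)).continuousAt.continuousWithinAt
    · intro y hy
      rw [interior_Icc] at hy
      rw [(hh y (hIcc (Ioo_subset_Icc_self hy))).deriv]
      have hyc : y ∈ Ioc a c := ⟨hy.1, le_trans hy.2.le (min_le_left _ _)⟩
      have hsl : 0 < slope H a y := hsub hyc
      rw [slope_def_field, hHa, sub_zero] at hsl
      have hya : 0 < y - a := sub_pos.2 hy.1
      have := mul_pos hsl hya
      rwa [div_mul_cancel₀ _ (ne_of_gt hya)] at this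
  have h1 := hmono (left_mem_Icc.2 hac'.le) (right_mem_Icc.2 hac'.le) hac'
  have h2 := hmax c' (hIcc (right_mem_Icc.2 hac'.le))
  linarith

/-- Non-degeneracy / maximum principle lemma for the obstacle problem:
if `∂ₜu - u'' ≤ -θ` on the positivity set and `u ≤ (θ/3)ϱ²`, then `u(x₀,t₀)=0`. -/
theorem stmt4 (θ x₀ t₀ ϱ : ℝ) (hθ : 0 < θ) (ht₀ : 0 < t₀) (hϱ : 0 < ϱ)
    (hϱt : ϱ < Real.sqrt t₀)
    (u ut ux uxx : ℝ → ℝ → ℝ)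
    (hcont : ContinuousOn (fun q : ℝ × ℝ => u q.1 q.2)
      (Icc (x₀ - ϱ) (x₀ + ϱ) ×ˢ Icc (t₀ - ϱ^2) t₀))
    (hreg : ∀ x ∈ Ioo (x₀ - ϱ) (x₀ + ϱ), ∀ t ∈ Ioc (t₀ - ϱ^2) t₀,
      HasDerivAt (fun s => u x s) (ut x t) t ∧
      HasDerivAt (fun y => u y t) (ux x t) x ∧
      HasDerivAt (fun y => ux y t) (uxx x t) x)
    (hnonneg : ∀ x ∈ Icc (x₀ - ϱ) (x₀ + ϱ), ∀ t ∈ Ioc (t₀ - ϱ^2) t₀, 0 ≤ u x t)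
    (hpde : ∀ x ∈ Ioo (x₀ - ϱ) (x₀ + ϱ), ∀ t ∈ Ioo (t₀ - ϱ^2) t₀,
      0 < u x t → ut x t - uxx x t ≤ -θ)
    (hbdd : ∀ x ∈ Icc (x₀ - ϱ) (x₀ + ϱ), ∀ t ∈ Ioc (t₀ - ϱ^2) t₀,
      u x t ≤ θ / 3 * ϱ^2) :
    u x₀ t₀ = 0 := by
  have hϱ2 : ϱ^2 < t₀ := by
    nlinarith [Real.sq_sqrt ht₀.le, Real.sqrt_nonneg t₀]
  obtain ⟨lo, hlodef⟩ : ∃ lo : ℝ, lo = t₀ - ϱ^2 := ⟨_, rfl⟩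
  rw [← hlodef] at hcont hreg hnonneg hpde hbdd
  have hlot : lo < t₀ := by rw [hlodef]; nlinarith
  have hx₀ : x₀ ∈ Icc (x₀ - ϱ) (x₀ + ϱ) := by constructor <;> linarith
  -- the bound extends to the bottom of the cylinder by continuity
  have hbot : ∀ x ∈ Icc (x₀ - ϱ) (x₀ + ϱ), u x lo ≤ θ / 3 * ϱ^2 := by
    intro x hx
    have hxt : ((x, lo) : ℝ × ℝ) ∈ Icc (x₀ - ϱ) (x₀ + ϱ) ×ˢ Icc lo t₀ :=
      ⟨hx, le_refl _, hlot.le⟩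
    have hcx : ContinuousWithinAt (fun t => u x t) (Icc lo t₀) lo := by
      have hmap : MapsTo (fun t : ℝ => ((x, t) : ℝ × ℝ)) (Icc lo t₀)
          (Icc (x₀ - ϱ) (x₀ + ϱ) ×ˢ Icc lo t₀) := fun t ht => ⟨hx, ht⟩
      exact (hcont (x, lo) hxt).comp
        ((continuous_const.prodMk continuous_id).continuousWithinAt) hmap
    have hne : (𝓝[Ioc lo t₀] lo).NeBot := by
      rw [nhdsWithin_Ioc_eq_nhdsGT hlot]; infer_instance
    refine le_of_tendsto (hcx.mono Ioc_subset_Icc_self) ?_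
    filter_upwards [self_mem_nhdsWithin] with t ht
    exact hbdd x hx t ht
  -- key comparison estimate
  have key : ∀ ε > 0, ∀ t₁ ∈ Ioo lo t₀,
      u x₀ t₁ ≤ θ / 3 * (t₀ - t₁) + ε * (t₁ - lo) := by
    intro ε hε t₁ ht₁
    obtain ⟨w, hwdef⟩ : ∃ w : ℝ → ℝ → ℝ,
        w = fun x t => θ / 3 * (x - x₀)^2 + (θ / 3 * (t₀ - t) + ε * (t - lo)) := ⟨_, rfl⟩
    obtain ⟨v, hvdef⟩ : ∃ v : ℝ × ℝ → ℝ,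
        v = fun q : ℝ × ℝ => u q.1 q.2 - w q.1 q.2 := ⟨_, rfl⟩
    set K : Set (ℝ × ℝ) := Icc (x₀ - ϱ) (x₀ + ϱ) ×ˢ Icc lo t₁ with hKdef
    have hKsub : K ⊆ Icc (x₀ - ϱ) (x₀ + ϱ) ×ˢ Icc lo t₀ := fun q hq =>
      ⟨hq.1, hq.2.1, le_trans hq.2.2 ht₁.2.le⟩
    have hKcompact : IsCompact K := isCompact_Icc.prod isCompact_Icc
    have hKne : K.Nonempty := ⟨(x₀, t₁), hx₀, le_of_lt ht₁.1, le_refl _⟩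
    have hvcont : ContinuousOn v K := by
      rw [hvdef, hwdef]
      exact (hcont.mono hKsub).sub (by fun_prop)
    obtain ⟨⟨a, b⟩, habK, hmax⟩ := hKcompact.exists_isMaxOn hKne hvcont
    have hmax' : ∀ q ∈ K, v q ≤ v (a, b) := fun q hq => hmax hq
    have ha : a ∈ Icc (x₀ - ϱ) (x₀ + ϱ) := habK.1
    have hb : b ∈ Icc lo t₁ := habK.2
    have hθ3 : (0:ℝ) ≤ θ / 3 := by linarith
    -- w is nonnegative on K
    have hwnn : ∀ x, ∀ t ∈ Icc lo t₁, 0 ≤ w x t := by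
      intro x t ht
      have h2 : t ≤ t₀ := le_trans ht.2 ht₁.2.le
      have h3 : lo ≤ t := ht.1
      simp only [hwdef]
      nlinarith [mul_nonneg hθ3 (by linarith : (0:ℝ) ≤ t₀ - t),
        mul_nonneg hε.le (by linarith : (0:ℝ) ≤ t - lo),
        mul_nonneg hθ3 (sq_nonneg (x - x₀))]
    -- the maximum of v is ≤ 0
    have hvab : v (a, b) ≤ 0 := by
      by_contra hcon
      push_neg at hcon
      have hcon' : 0 < u a b - w a b := by
        have := hcon
        rw [hvdef] at this
        exact this
      have hwab : w a b = θ / 3 * (a - x₀)^2 + (θ / 3 * (t₀ - b) + ε * (b - lo)) := by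
        rw [hwdef]
      -- u a b ≤ θ/3 ϱ² in all cases
      have hub : u a b ≤ θ / 3 * ϱ^2 := by
        rcases eq_or_lt_of_le hb.1 with hbl | hbl
        · rw [← hbl]; exact hbot a ha
        · exact hbdd a ha b ⟨hbl, le_trans hb.2 ht₁.2.le⟩
      have hupos : 0 < u a b := by
        have := hwnn a b hb
        linarith
      have hblob : lo ≤ b := hb.1
      have hbt₀ : b ≤ t₀ := le_trans hb.2 ht₁.2.le
      have h10 : (0:ℝ) ≤ θ / 3 * (t₀ - b) := mul_nonneg hθ3 (by linarith)
      have h12 : (0:ℝ) ≤ ε * (b - lo) := mul_nonneg hε.le (by linarith)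
      -- b is not at the bottom
      have hblo : lo < b := by
        rcases eq_or_lt_of_le hb.1 with hbl | hbl
        · exfalso
          have h13 : ε * (b - lo) = 0 := by rw [← hbl]; ring
          have h14 : θ / 3 * (t₀ - b) = θ / 3 * ϱ^2 := by
            rw [← hbl, hlodef]; ring
          have h9 : (0:ℝ) ≤ θ / 3 * (a - x₀)^2 := mul_nonneg hθ3 (sq_nonneg _)
          linarith
        · exact hbl
      -- a is in the interior
      have haI : a ∈ Ioo (x₀ - ϱ) (x₀ + ϱ) := by
        have hgen : (a - x₀)^2 = ϱ^2 → False := by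
          intro hsq
          have h11 : θ / 3 * (a - x₀)^2 = θ / 3 * ϱ^2 := by rw [hsq]
          linarith
        rcases eq_or_lt_of_le ha.1 with hal | hal
        · exact absurd (hgen (by rw [← hal]; ring)) not_false
        · rcases eq_or_lt_of_le ha.2 with har | har
          · exact absurd (hgen (by rw [har]; ring)) not_false
          · exact ⟨hal, har⟩
      have hbIoc : b ∈ Ioc lo t₀ := ⟨hblo, hbt₀⟩
      have hbIoo : b ∈ Ioo lo t₀ := ⟨hblo, lt_of_le_of_lt hb.2 ht₁.2⟩
      obtain ⟨hrt, hrx, hrxx⟩ := hreg a haI b hbIoc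
      -- time derivative inequality: ut a b ≥ ε - θ/3
      have htime : ε - θ / 3 ≤ ut a b := by
        have hw_t : HasDerivAt (fun t => w a t) (ε - θ / 3) b := by
          simp only [hwdef]
          have h1 : HasDerivAt (fun t : ℝ => θ / 3 * (t₀ - t)) (θ / 3 * (0 - 1)) b :=
            ((hasDerivAt_const b t₀).sub (hasDerivAt_id b)).const_mul (θ / 3)
          have h2 : HasDerivAt (fun t : ℝ => ε * (t - lo)) (ε * (1 - 0)) b :=
            ((hasDerivAt_id b).sub (hasDerivAt_const b lo)).const_mul ε
          have h3 := (h1.add h2).const_add (θ / 3 * (a - x₀)^2)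
          exact h3.congr_deriv (by ring)
        have hg : HasDerivAt (fun t => u a t - w a t) (ut a b - (ε - θ / 3)) b :=
          hrt.sub hw_t
        have hgmax : ∀ t ∈ Ioo lo b, u a t - w a t ≤ u a b - w a b := by
          intro t ht
          have hmem : ((a, t) : ℝ × ℝ) ∈ K := ⟨ha, ht.1.le, le_trans ht.2.le hb.2⟩
          have := hmax' (a, t) hmem
          rw [hvdef] at this
          exact this
        have := aux_left_deriv_nonneg hblo hg hgmax
        linarith
      -- space second-derivative inequality: uxx a b ≤ 2θ/3
      have hspace : uxx a b ≤ θ / 3 * 2 := by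
        have hh : ∀ y ∈ Ioo (x₀ - ϱ) (x₀ + ϱ),
            HasDerivAt (fun x => u x b - w x b)
              (ux y b - θ / 3 * (2 * (y - x₀))) y := by
          intro y hy
          obtain ⟨_, hrx', _⟩ := hreg y hy b hbIoc
          have hwx : HasDerivAt (fun x => w x b) (θ / 3 * (2 * (y - x₀))) y := by
            simp only [hwdef]
            have h1 : HasDerivAt (fun x : ℝ => (x - x₀)^2)
                (2 * (y - x₀)^(2-1) * 1) y := ((hasDerivAt_id y).sub_const x₀).pow 2
            have h2 := (h1.const_mul (θ / 3)).add_const (θ / 3 * (t₀ - b) + ε * (b - lo))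
            exact h2.congr_deriv (by ring)
          exact hrx'.sub hwx
        have hH' : HasDerivAt (fun y => ux y b - θ / 3 * (2 * (y - x₀)))
            (uxx a b - θ / 3 * 2) a := by
          have h1 : HasDerivAt (fun y : ℝ => θ / 3 * (2 * (y - x₀))) (θ / 3 * 2) a := by
            have h2 := (((hasDerivAt_id a).sub_const x₀).const_mul 2).const_mul (θ / 3)
            exact h2.congr_deriv (by ring)
          exact hrxx.sub h1
        have hhmax : ∀ y ∈ Ioo (x₀ - ϱ) (x₀ + ϱ),
            u y b - w y b ≤ u a b - w a b := by
          intro y hy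
          have hmem : ((y, b) : ℝ × ℝ) ∈ K := ⟨Ioo_subset_Icc_self hy, hb⟩
          have := hmax' (y, b) hmem
          rw [hvdef] at this
          exact this
        have := aux_snd_deriv_nonpos haI hh hH' hhmax
        linarith
      have hpd := hpde a haI b hbIoo hupos
      linarith
    -- conclude
    have hfin := le_trans (hmax' (x₀, t₁) ⟨hx₀, ht₁.1.le, le_refl _⟩) hvab
    rw [hvdef] at hfin
    have hwfin : w x₀ t₁ = θ / 3 * (t₀ - t₁) + ε * (t₁ - lo) := by
      rw [hwdef]; ring_nf
    simp only at hfin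
    linarith
  -- take ε → 0: u x₀ t₁ ≤ θ/3 (t₀ - t₁)
  have key2 : ∀ t₁ ∈ Ioo lo t₀, u x₀ t₁ ≤ θ / 3 * (t₀ - t₁) := by
    intro t₁ ht₁
    have hden : 0 < t₁ - lo := sub_pos.2 ht₁.1
    by_contra hcon
    push_neg at hcon
    have hη : 0 < u x₀ t₁ - θ / 3 * (t₀ - t₁) := by linarith
    have hkey := key ((u x₀ t₁ - θ / 3 * (t₀ - t₁)) / (2 * (t₁ - lo))) (by positivity) t₁ ht₁
    have h2 : (u x₀ t₁ - θ / 3 * (t₀ - t₁)) / (2 * (t₁ - lo)) * (t₁ - lo)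
        = (u x₀ t₁ - θ / 3 * (t₀ - t₁)) / 2 := by
      field_simp
    rw [h2] at hkey
    linarith
  -- take t₁ → t₀
  have hle : u x₀ t₀ ≤ 0 := by
    have hxt : ((x₀, t₀) : ℝ × ℝ) ∈ Icc (x₀ - ϱ) (x₀ + ϱ) ×ˢ Icc lo t₀ :=
      ⟨hx₀, hlot.le, le_refl _⟩
    have hcx : ContinuousWithinAt (fun t => u x₀ t) (Icc lo t₀) t₀ := by
      have hmap : MapsTo (fun t : ℝ => ((x₀, t) : ℝ × ℝ)) (Icc lo t₀)
          (Icc (x₀ - ϱ) (x₀ + ϱ) ×ˢ Icc lo t₀) := fun t ht => ⟨hx₀, ht⟩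
      exact (hcont (x₀, t₀) hxt).comp
        ((continuous_const.prodMk continuous_id).continuousWithinAt) hmap
    have hne : (𝓝[Ioo lo t₀] t₀).NeBot := by
      rw [nhdsWithin_Ioo_eq_nhdsLT hlot]; infer_instance
    have htend1 : Tendsto (fun t => u x₀ t) (𝓝[Ioo lo t₀] t₀) (𝓝 (u x₀ t₀)) :=
      hcx.mono Ioo_subset_Icc_self
    have htend2 : Tendsto (fun t => θ / 3 * (t₀ - t)) (𝓝[Ioo lo t₀] t₀) (𝓝 0) := by
      have : Tendsto (fun t : ℝ => θ / 3 * (t₀ - t)) (𝓝 t₀) (𝓝 (θ / 3 * (t₀ - t₀))) := by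
        apply Continuous.tendsto
        fun_prop
      simp only [sub_self, mul_zero] at this
      exact this.mono_left nhdsWithin_le_nhds
    refine le_of_tendsto_of_tendsto htend1 htend2 ?_
    filter_upwards [self_mem_nhdsWithin] with t ht
    exact key2 t ht
  have hge : 0 ≤ u x₀ t₀ := hnonneg x₀ hx₀ t₀ ⟨hlot, le_refl _⟩
  linarith
end

section
/- Let δ > 0, μ > 0 and M > 0, and fix s, ω > 0 with ω ≤ s. Define V(x,t) = (M/2)(t − s + ω) e^{−μ(t−s+ω)/δ²} cos(π(x − c)/δ) on [c − δ/2, c + δ/2] × (s − ω, s], where c ∈ ℝ. If μ is sufficiently large (depending only on an upper bound for |c| + δ ≤ 1 and universal constants), then ∂_t V − ((1−x²)V)'' ≤ M on this domain, V(x, s−ω) = 0, and V(c ± δ/2, t) = 0 for all t. -/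
open Set

/-- The barrier function `V(x,t) = (M/2)(t-s+ω) e^{-μ(t-s+ω)/δ²} cos(π(x-c)/δ)`. -/
noncomputable def barrier (M s ω δ c μ x t : ℝ) : ℝ :=
  (M/2) * (t - s + ω) * Real.exp (-μ * (t - s + ω) / δ^2) *
    Real.cos (Real.pi * (x - c) / δ)

lemma time_deriv (M s ω δ c μ x t : ℝ) :
    HasDerivAt (fun r => barrier M s ω δ c μ x r)
      (M/2 * Real.exp (-μ * (t - s + ω) / δ^2) * Real.cos (Real.pi * (x - c) / δ)
        - M/2 * (t - s + ω) * (μ/δ^2) * Real.exp (-μ * (t - s + ω) / δ^2)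
            * Real.cos (Real.pi * (x - c) / δ)) t := by
  unfold barrier
  have h1 : HasDerivAt (fun r : ℝ => M/2 * (r - s + ω)) (M/2) t := by
    simpa using (((hasDerivAt_id t).sub_const s).add_const ω).const_mul (M/2)
  have h2 : HasDerivAt (fun r : ℝ => -μ * (r - s + ω) / δ^2) (-μ/δ^2) t := by
    simpa using ((((hasDerivAt_id t).sub_const s).add_const ω).const_mul (-μ)).div_const (δ^2)
  have h4 := (h1.mul h2.exp).mul_const (Real.cos (Real.pi * (x - c) / δ))
  refine h4.congr_deriv ?_
  ring

lemma space_d1 (M s ω δ c μ t y : ℝ) :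
    HasDerivAt (fun y => (1 - y^2) * barrier M s ω δ c μ y t)
      (M/2 * (t - s + ω) * Real.exp (-μ * (t - s + ω) / δ^2) *
        (-(2*y) * Real.cos (Real.pi * (y - c) / δ)
          - (1 - y^2) * (Real.pi/δ) * Real.sin (Real.pi * (y - c) / δ))) y := by
  unfold barrier
  have hθ : HasDerivAt (fun y : ℝ => Real.pi * (y - c) / δ) (Real.pi/δ) y := by
    simpa using (((hasDerivAt_id y).sub_const c).const_mul Real.pi).div_const δ
  have hq : HasDerivAt (fun y : ℝ => 1 - y^2) (-(2*y)) y := by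
    simpa using ((hasDerivAt_pow 2 y).const_sub 1)
  have h := hq.mul
    (hθ.cos.const_mul (M/2 * (t - s + ω) * Real.exp (-μ * (t - s + ω) / δ^2)))
  refine h.congr_deriv ?_
  ring

lemma space_d2 (M s ω δ c μ t x : ℝ) :
    HasDerivAt (fun y : ℝ => M/2 * (t - s + ω) * Real.exp (-μ * (t - s + ω) / δ^2) *
        (-(2*y) * Real.cos (Real.pi * (y - c) / δ)
          - (1 - y^2) * (Real.pi/δ) * Real.sin (Real.pi * (y - c) / δ)))
      (M/2 * (t - s + ω) * Real.exp (-μ * (t - s + ω) / δ^2) *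
        (-2 * Real.cos (Real.pi * (x - c) / δ)
          + 4*x*(Real.pi/δ) * Real.sin (Real.pi * (x - c) / δ)
          - (1 - x^2) * (Real.pi/δ)^2 * Real.cos (Real.pi * (x - c) / δ))) x := by
  have hθ : HasDerivAt (fun y : ℝ => Real.pi * (y - c) / δ) (Real.pi/δ) x := by
    simpa using (((hasDerivAt_id x).sub_const c).const_mul Real.pi).div_const δ
  have hq : HasDerivAt (fun y : ℝ => 1 - y^2) (-(2*x)) x := by
    simpa using ((hasDerivAt_pow 2 x).const_sub 1)
  have h1 : HasDerivAt (fun y : ℝ => -(2*y)) (-2 : ℝ) x := by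
    simpa using ((hasDerivAt_id x).const_mul (2:ℝ)).fun_neg
  have ht1 := h1.mul hθ.cos
  have ht2 := (hq.mul_const (Real.pi/δ)).mul hθ.sin
  have h := (ht1.sub ht2).const_mul
    (M/2 * (t - s + ω) * Real.exp (-μ * (t - s + ω) / δ^2))
  refine h.congr_deriv ?_
  ring

lemma space_iter (M s ω δ c μ t x : ℝ) :
    iteratedDeriv 2 (fun y => (1 - y^2) * barrier M s ω δ c μ y t) x
      = M/2 * (t - s + ω) * Real.exp (-μ * (t - s + ω) / δ^2) *
        (-2 * Real.cos (Real.pi * (x - c) / δ)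
          + 4*x*(Real.pi/δ) * Real.sin (Real.pi * (x - c) / δ)
          - (1 - x^2) * (Real.pi/δ)^2 * Real.cos (Real.pi * (x - c) / δ)) := by
  rw [iteratedDeriv_succ, iteratedDeriv_one]
  have hd : deriv (fun y => (1 - y^2) * barrier M s ω δ c μ y t)
      = fun y => M/2 * (t - s + ω) * Real.exp (-μ * (t - s + ω) / δ^2) *
        (-(2*y) * Real.cos (Real.pi * (y - c) / δ)
          - (1 - y^2) * (Real.pi/δ) * Real.sin (Real.pi * (y - c) / δ)) :=
    funext fun y => (space_d1 M s ω δ c μ t y).deriv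
  rw [hd]
  exact (space_d2 M s ω δ c μ t x).deriv

set_option maxHeartbeats 2000000 in
/-- For `μ` sufficiently large, the barrier `V` satisfies
`∂ₜV - ((1-x²)V)'' ≤ M` on `[c-δ/2,c+δ/2] × (s-ω,s]`, vanishes at `t = s-ω`,
and vanishes at `x = c ± δ/2`. -/
theorem stmt16 (δ M s ω c : ℝ) (hδ : 0 < δ) (hδ1 : δ ≤ 1) (hM : 0 < M)
    (hs : 0 < s) (hω : 0 < ω) (hωs : ω ≤ s)
    (hdom : Icc (c - δ/2) (c + δ/2) ⊆ Ioo (-1:ℝ) 1) :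
    ∃ μ₀ : ℝ, 0 < μ₀ ∧ ∀ μ : ℝ, μ₀ ≤ μ →
      (∀ x ∈ Icc (c - δ/2) (c + δ/2), ∀ t ∈ Ioc (s - ω) s,
        deriv (fun r => barrier M s ω δ c μ x r) t -
          iteratedDeriv 2 (fun y => (1 - y^2) * barrier M s ω δ c μ y t) x ≤ M) ∧
      (∀ x ∈ Icc (c - δ/2) (c + δ/2), barrier M s ω δ c μ x (s - ω) = 0) ∧
      (∀ t ∈ Ioc (s - ω) s,
        barrier M s ω δ c μ (c - δ/2) t = 0 ∧ barrier M s ω δ c μ (c + δ/2) t = 0) := by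
  refine ⟨25, by norm_num, fun μ hμ => ⟨?_, ?_, ?_⟩⟩
  · intro x hx t ht
    rw [(time_deriv M s ω δ c μ x t).deriv, space_iter M s ω δ c μ t x]
    have hδ2 : (0:ℝ) < δ^2 := by positivity
    have hμ0 : (0:ℝ) < μ := by linarith
    set τ := t - s + ω with hτdef
    set E := Real.exp (-μ * τ / δ^2) with hE
    set C := Real.cos (Real.pi * (x - c) / δ) with hCdef
    set S := Real.sin (Real.pi * (x - c) / δ) with hSdef
    have hτ0 : 0 < τ := by
      have := ht.1; rw [hτdef]; linarith
    have hE0 : 0 < E := Real.exp_pos _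
    have hE1 : E ≤ 1 := by
      rw [hE, show (1:ℝ) = Real.exp 0 by simp]
      apply Real.exp_le_exp.mpr
      apply div_nonpos_of_nonpos_of_nonneg _ hδ2.le
      nlinarith
    have hC0 : (0:ℝ) ≤ C := by
      rw [hCdef]
      apply Real.cos_nonneg_of_mem_Icc
      constructor
      · rw [le_div_iff₀ hδ]
        nlinarith [Real.pi_pos, hx.1]
      · rw [div_le_iff₀ hδ]
        nlinarith [Real.pi_pos, hx.2]
    have hC1 : C ≤ 1 := Real.cos_le_one _
    have hS1 : -1 ≤ S := Real.neg_one_le_sin _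
    have hS2 : S ≤ 1 := Real.sin_le_one _
    have hxm := hdom hx
    have hx1 : -1 ≤ x := hxm.1.le
    have hx2 : x ≤ 1 := hxm.2.le
    have hπ0 := Real.pi_pos
    have hπ : Real.pi < 3.15 := Real.pi_lt_d2
    -- key estimate : μ τ E ≤ δ²
    have hkey : μ * τ * E ≤ δ^2 := by
      set u := μ * τ / δ^2 with hu
      have hEeq : E = Real.exp (-u) := by rw [hE]; congr 1; rw [hu]; ring
      have hu1 := Real.add_one_le_exp u
      have hprod : Real.exp (-u) * Real.exp u = 1 := by
        rw [← Real.exp_add]; simp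
      have hp : 0 < Real.exp (-u) := Real.exp_pos _
      have h1 : u * Real.exp (-u) ≤ 1 := by
        nlinarith [mul_le_mul_of_nonneg_left hu1 hp.le]
      have hμτ : μ * τ = u * δ^2 := by rw [hu]; field_simp
      rw [hμτ, hEeq]
      nlinarith
    have hq0 : (0:ℝ) ≤ τ * E := mul_nonneg hτ0.le hE0.le
    have hP0 : (0:ℝ) < Real.pi / δ := div_pos hπ0 hδ
    have h3 : τ * E ≤ 1/μ := by
      rw [le_div_iff₀ hμ0]
      nlinarith
    have h4 : τ * E * (Real.pi/δ) ≤ Real.pi * (1/μ) := by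
      have hstep := mul_le_mul_of_nonneg_right hkey hP0.le
      have heq : δ^2 * (Real.pi/δ) = δ * Real.pi := by field_simp
      rw [heq] at hstep
      rw [show Real.pi * (1/μ) = Real.pi / μ by ring, le_div_iff₀ hμ0]
      have hδπ : δ * Real.pi ≤ Real.pi := by nlinarith
      linarith [hstep]
    have h5 : τ * E * (Real.pi/δ)^2 ≤ Real.pi^2 * (1/μ) := by
      have hstep := mul_le_mul_of_nonneg_right hkey (le_of_lt (by positivity : (0:ℝ) < (Real.pi/δ)^2))
      have heq : δ^2 * (Real.pi/δ)^2 = Real.pi^2 := by field_simp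
      rw [heq] at hstep
      rw [show Real.pi^2 * (1/μ) = Real.pi^2 / μ by ring, le_div_iff₀ hμ0]
      linarith [hstep]
    -- assemble
    have hEC : E * C ≤ 1 := by nlinarith
    have hb1 : M/2 * E * C ≤ M/2 := by nlinarith [mul_le_mul_of_nonneg_left hEC (by linarith : (0:ℝ) ≤ M/2)]
    have hb2 : 0 ≤ M/2 * τ * (μ/δ^2) * E * C := by
      have := div_pos hμ0 hδ2
      apply mul_nonneg (mul_nonneg (mul_nonneg (mul_nonneg (by linarith) hτ0.le) this.le) hE0.le) hC0
    have hm3 : M * (τ * E * C) ≤ M * (1/μ) := by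
      apply mul_le_mul_of_nonneg_left _ hM.le
      calc τ * E * C ≤ τ * E * 1 := mul_le_mul_of_nonneg_left hC1 hq0
        _ ≤ 1/μ := by rw [mul_one]; exact h3
    have hxS : -(x*S) ≤ 1 := by nlinarith
    have hqP0 : (0:ℝ) ≤ τ * E * (Real.pi/δ) := mul_nonneg hq0 hP0.le
    have hm4 : 2*M * (-(x*S) * (τ * E * (Real.pi/δ))) ≤ 2*M * (Real.pi * (1/μ)) := by
      apply mul_le_mul_of_nonneg_left _ (by linarith)
      calc -(x*S) * (τ * E * (Real.pi/δ)) ≤ 1 * (τ * E * (Real.pi/δ)) :=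
            mul_le_mul_of_nonneg_right hxS hqP0
        _ ≤ Real.pi * (1/μ) := by rw [one_mul]; exact h4
    have h1x : (0:ℝ) ≤ 1 - x^2 := by nlinarith
    have hqP2 : (0:ℝ) ≤ τ * E * (Real.pi/δ)^2 := mul_nonneg hq0 (by positivity)
    have hm5 : M/2 * ((1-x^2)*C * (τ * E * (Real.pi/δ)^2)) ≤ M/2 * (Real.pi^2 * (1/μ)) := by
      apply mul_le_mul_of_nonneg_left _ (by linarith)
      calc (1-x^2)*C * (τ * E * (Real.pi/δ)^2) ≤ 1 * (τ * E * (Real.pi/δ)^2) := by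
            apply mul_le_mul_of_nonneg_right _ hqP2
            nlinarith
        _ ≤ Real.pi^2 * (1/μ) := by rw [one_mul]; exact h5
    have hinv : 1/μ ≤ 1/25 := by
      apply one_div_le_one_div_of_le (by norm_num) hμ
    have e8 : M * (1/μ) ≤ M * (1/25) := mul_le_mul_of_nonneg_left hinv hM.le
    have e6 : M * (Real.pi * (1/μ)) ≤ M * (Real.pi * (1/25)) := by
      apply mul_le_mul_of_nonneg_left _ hM.le
      exact mul_le_mul_of_nonneg_left hinv hπ0.le
    have e7 : M * (Real.pi^2 * (1/μ)) ≤ M * (Real.pi^2 * (1/25)) := by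
      apply mul_le_mul_of_nonneg_left _ hM.le
      exact mul_le_mul_of_nonneg_left hinv (by positivity)
    have hMp : M * Real.pi ≤ M * 3.15 := mul_le_mul_of_nonneg_left hπ.le hM.le
    have hMp2 : M * Real.pi^2 ≤ M * 9.9225 := by nlinarith
    linarith [hb1, hb2, hm3, hm4, hm5, e6, e7, e8, hMp, hMp2, hM.le]
  · intro x hx
    unfold barrier
    rw [show s - ω - s + ω = 0 by ring]
    simp
  · intro t ht
    constructor
    · unfold barrier
      rw [show Real.pi * (c - δ/2 - c) / δ = -(Real.pi/2) by field_simp; ring]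
      simp
    · unfold barrier
      rw [show Real.pi * (c + δ/2 - c) / δ = Real.pi/2 by field_simp; ring]
      simp
end
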